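/- Let M be an m×n complex matrix, let I be a set of k row indices and J a set of l column indices, and set C = M(:,J) ∈ ℂ^{m×l}, R = M(I,:) ∈ ℂ^{k×n}, and G = M(I,J) ∈ ℂ^{k×l}. If rank(G) = rank(M), then for every l×k complex matrix X satisfying G·X·G = G (a generalized inverse of G), one has M = C·X·R. -/

import Mathlib

open Matrix

/-- Column-selection as right multiplication. -/
private lemma submatrix_col_eq_mul {p q r : ℕ} (A : Matrix (Fin p) (Fin q) ℂ)
    (e : Fin r → Fin q) :
    A.submatrix id e = A * Matrix.of (fun j i => if e i = j then (1:ℂ) else 0) := by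
  ext a b
  simp [Matrix.mul_apply, Finset.sum_ite_eq, eq_comm]

private lemma range_le_of_mul {p q r : ℕ} (A : Matrix (Fin p) (Fin q) ℂ)
    (B : Matrix (Fin q) (Fin r) ℂ) :
    LinearMap.range (A * B).mulVecLin ≤ LinearMap.range A.mulVecLin := by
  rw [Matrix.mulVecLin_mul]
  exact LinearMap.range_comp_le_range _ _

/-- If the column space of `B` contains that of `A`, then `A = B * Y` for some `Y`. -/
private lemma exists_right_factor {p q r : ℕ} (A : Matrix (Fin p) (Fin q) ℂ)
    (B : Matrix (Fin p) (Fin r) ℂ)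
    (h : LinearMap.range A.mulVecLin ≤ LinearMap.range B.mulVecLin) :
    ∃ Y : Matrix (Fin r) (Fin q) ℂ, A = B * Y := by
  have hcol : ∀ j : Fin q, ∃ y : Fin r → ℂ, B.mulVec y = A.mulVec (Pi.single j 1) :=
    fun j => h ⟨Pi.single j 1, rfl⟩
  choose y hy using hcol
  refine ⟨fun i j => y j i, ?_⟩
  ext a b
  have := congrFun (hy b) a
  show A a b = ∑ x, B a x * y b x
  simpa [Matrix.mulVec, dotProduct, Matrix.mul_apply, Pi.single_apply,
    mul_ite, Finset.sum_ite_eq'] using this.symm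

/-- If `rank` doesn't drop when selecting columns, the column space is preserved. -/
private lemma exists_factor_of_rank {p q r : ℕ} (A : Matrix (Fin p) (Fin q) ℂ)
    (e : Fin r → Fin q) (h : A.rank ≤ (A.submatrix id e).rank) :
    ∃ Y : Matrix (Fin r) (Fin q) ℂ, A = (A.submatrix id e) * Y := by
  apply exists_right_factor
  have hle : LinearMap.range (A.submatrix id e).mulVecLin ≤ LinearMap.range A.mulVecLin := by
    rw [submatrix_col_eq_mul]; exact range_le_of_mul _ _
  have := Submodule.eq_of_le_of_finrank_le hle h
  rw [this]

theorem cur_decomposition_of_generalized_inverse {m n k l : ℕ}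
    (M : Matrix (Fin m) (Fin n) ℂ)
    (rowIdx : Fin k → Fin m) (colIdx : Fin l → Fin n)
    (hrow : Function.Injective rowIdx) (hcol : Function.Injective colIdx)
    (C : Matrix (Fin m) (Fin l) ℂ) (hC : C = M.submatrix id colIdx)
    (R : Matrix (Fin k) (Fin n) ℂ) (hR : R = M.submatrix rowIdx id)
    (G : Matrix (Fin k) (Fin l) ℂ) (hG : G = M.submatrix rowIdx colIdx)
    (hrank : G.rank = M.rank) :
    ∀ X : Matrix (Fin l) (Fin k) ℂ, G * X * G = G → M = C * X * R := by
  intro X hX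
  -- G is a row-submatrix of C and a column-submatrix of R
  have hGC : G = C.submatrix rowIdx id := by rw [hC, hG]; rfl
  have hGR : G = R.submatrix id colIdx := by rw [hR, hG]; rfl
  -- rank G ≤ rank C, rank G ≤ rank R
  have hGCrank : G.rank ≤ C.rank := by
    have : Gᵀ.rank ≤ Cᵀ.rank := by
      have : Gᵀ = Cᵀ.submatrix id rowIdx := by rw [hGC]; rfl
      rw [this, submatrix_col_eq_mul]
      exact Matrix.rank_mul_le_left _ _
    rwa [Matrix.rank_transpose, Matrix.rank_transpose] at this
  have hGRrank : G.rank ≤ R.rank := by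
    rw [hGR, submatrix_col_eq_mul]
    exact Matrix.rank_mul_le_left _ _
  -- M = C * Y
  obtain ⟨Y, hY⟩ : ∃ Y : Matrix (Fin l) (Fin n) ℂ, M = C * Y := by
    have := exists_factor_of_rank M colIdx (by rw [← hC]; exact hrank ▸ hGCrank)
    rwa [← hC] at this
  -- Mᵀ = Rᵀ * W, i.e. M = Z * R
  obtain ⟨W, hW⟩ : ∃ W : Matrix (Fin k) (Fin m) ℂ, Mᵀ = Rᵀ * W := by
    have hRt : Rᵀ = Mᵀ.submatrix id rowIdx := by rw [hR]; rfl
    have := exists_factor_of_rank Mᵀ rowIdx ?_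
    · rwa [← hRt] at this
    · rw [← hRt, Matrix.rank_transpose, Matrix.rank_transpose, ← hrank]
      exact hGRrank
  have hZ : M = Wᵀ * R := by
    have := congrArg Matrix.transpose hW
    simpa [Matrix.transpose_mul] using this
  -- R = G * Y
  have hRGY : R = G * Y := by
    rw [hR, hY, hGC]
    ext a b
    simp [Matrix.mul_apply, Matrix.submatrix]
  -- C = Wᵀ * G
  have hCWG : C = Wᵀ * G := by
    rw [hC, hZ, hGR]
    ext a b
    simp [Matrix.mul_apply, Matrix.submatrix]
  calc M = Wᵀ * R := hZ
    _ = Wᵀ * (G * Y) := by rw [← hRGY]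
    _ = Wᵀ * ((G * X * G) * Y) := by rw [hX]
    _ = (Wᵀ * G) * X * (G * Y) := by simp only [Matrix.mul_assoc]
    _ = C * X * R := by rw [← hCWG, ← hRGY]
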